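/- For identical stages (common v_ex and ε), among all choices of mass ratios μ_1,…,μ_n ∈ (1, 1/ε) satisfying Σ v_ex ln μ_k = Δv_req, the product ∏ μ_k(1-ε)/(1-μ_k ε) is minimized when all μ_k are equal. -/

import Mathlib

open Real Set

lemma stageF_convex (ε : ℝ) (hε0 : 0 < ε) (hε1 : ε < 1) :
    ConvexOn ℝ (Iio (Real.log (1/ε)))
      (fun x => x + Real.log (1-ε) - Real.log (1 - ε * Real.exp x)) := by
  have hL : Real.exp (Real.log (1/ε)) = 1/ε := Real.exp_log (by positivity)
  have hpos : ∀ x ∈ Iio (Real.log (1/ε)), 0 < 1 - ε * Real.exp x := by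
    intro x hx
    have : Real.exp x < 1/ε := by
      rw [← hL]; exact Real.exp_lt_exp.2 hx
    rw [lt_div_iff₀ hε0] at this
    linarith
  have hint : interior (Iio (Real.log (1/ε))) = Iio (Real.log (1/ε)) :=
    interior_eq_iff_isOpen.2 isOpen_Iio
  refine convexOn_of_hasDerivWithinAt2_nonneg (convex_Iio _)
    (f' := fun x => 1 + ε * Real.exp x / (1 - ε * Real.exp x))
    (f'' := fun x => ε * Real.exp x / (1 - ε * Real.exp x)^2)
    ?_ ?_ ?_ ?_
  · apply ContinuousOn.sub
    · exact (continuousOn_id.add continuousOn_const)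
    · apply ContinuousOn.log
      · exact (continuousOn_const.sub (continuousOn_const.mul Real.continuous_exp.continuousOn))
      · intro x hx; exact (hpos x hx).ne'
  · rw [hint]; intro x hx
    have h1 : HasDerivAt (fun x => 1 - ε * Real.exp x) (-(ε * Real.exp x)) x := by
      simpa using ((Real.hasDerivAt_exp x).const_mul ε).const_sub 1
    have h2 : HasDerivAt (fun x => Real.log (1 - ε * Real.exp x))
        (-(ε * Real.exp x) / (1 - ε * Real.exp x)) x :=
      h1.log (hpos x hx).ne'
    have h3 : HasDerivAt (fun x => x + Real.log (1-ε) - Real.log (1 - ε * Real.exp x))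
        (1 - (-(ε * Real.exp x) / (1 - ε * Real.exp x))) x := by
      exact ((hasDerivAt_id x).add_const (Real.log (1-ε))).sub h2
    have : 1 - (-(ε * Real.exp x) / (1 - ε * Real.exp x))
        = 1 + ε * Real.exp x / (1 - ε * Real.exp x) := by ring
    rw [this] at h3
    exact h3.hasDerivWithinAt
  · rw [hint]; intro x hx
    have hv := hpos x hx
    have hu : HasDerivAt (fun x => ε * Real.exp x) (ε * Real.exp x) x :=
      (Real.hasDerivAt_exp x).const_mul ε
    have hd : HasDerivAt (fun x => 1 - ε * Real.exp x) (-(ε * Real.exp x)) x := by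
      simpa using hu.const_sub 1
    have h2 : HasDerivAt (fun x => ε * Real.exp x / (1 - ε * Real.exp x))
        ((ε * Real.exp x * (1 - ε * Real.exp x) - ε * Real.exp x * (-(ε * Real.exp x)))
          / (1 - ε * Real.exp x)^2) x := hu.div hd hv.ne'
    have h3 : HasDerivAt (fun x => 1 + ε * Real.exp x / (1 - ε * Real.exp x))
        ((ε * Real.exp x * (1 - ε * Real.exp x) - ε * Real.exp x * (-(ε * Real.exp x)))
          / (1 - ε * Real.exp x)^2) x := by simpa using h2.const_add 1
    have : (ε * Real.exp x * (1 - ε * Real.exp x) - ε * Real.exp x * (-(ε * Real.exp x)))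
          / (1 - ε * Real.exp x)^2 = ε * Real.exp x / (1 - ε * Real.exp x)^2 := by
      field_simp; ring
    rw [this] at h3
    exact h3.hasDerivWithinAt
  · rw [hint]; intro x hx
    have := hpos x hx
    positivity

theorem equal_stages_minimize_product (n : ℕ) (hn : 1 ≤ n) (vex ε Δvreq : ℝ)
    (hvex : 0 < vex) (hε0 : 0 < ε) (hε1 : ε < 1)
    (hΔ0 : 0 < Δvreq) (hΔ : Δvreq < n * vex * Real.log (1 / ε))
    (μ : Fin n → ℝ) (hμ : ∀ k, μ k ∈ Set.Ioo 1 (1 / ε))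
    (hsum : ∑ k, vex * Real.log (μ k) = Δvreq) :
    (∏ _k : Fin n, Real.exp (Δvreq / (n * vex)) * (1 - ε) /
        (1 - Real.exp (Δvreq / (n * vex)) * ε)) ≤
      ∏ k, μ k * (1 - ε) / (1 - μ k * ε) := by
  have hn0 : (0:ℝ) < n := by exact_mod_cast hn
  set L := Real.log (1/ε) with hLdef
  set F : ℝ → ℝ := fun x => x + Real.log (1-ε) - Real.log (1 - ε * Real.exp x) with hF
  set m := Δvreq / (n * vex) with hm
  have hL : Real.exp L = 1/ε := Real.exp_log (by positivity)
  -- positivity helper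
  have hpos : ∀ x ∈ Iio L, 0 < 1 - ε * Real.exp x := by
    intro x hx
    have : Real.exp x < 1/ε := by rw [← hL]; exact Real.exp_lt_exp.2 hx
    rw [lt_div_iff₀ hε0] at this; linarith
  have hmL : m ∈ Iio L := by
    rw [hm, mem_Iio, div_lt_iff₀ (by positivity)]
    linarith [hΔ]
  have hlogμ : ∀ k, Real.log (μ k) ∈ Iio L := by
    intro k
    exact mem_Iio.2 (Real.log_lt_log (lt_trans zero_lt_one (hμ k).1) (hμ k).2)
  -- exp(F x) formula
  have hexpF : ∀ x ∈ Iio L, Real.exp (F x) = Real.exp x * (1-ε) / (1 - Real.exp x * ε) := by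
    intro x hx
    rw [hF]
    simp only
    rw [Real.exp_sub, Real.exp_add, Real.exp_log (by linarith : (0:ℝ) < 1-ε),
      Real.exp_log (hpos x hx)]
    ring_nf
  -- Jensen
  have hconv := stageF_convex ε hε0 hε1
  have hJ := hconv.map_sum_le (t := Finset.univ) (w := fun _ : Fin n => (n:ℝ)⁻¹)
    (p := fun k => Real.log (μ k)) (fun i _ => by positivity)
    (by simp [Finset.card_univ]; field_simp; try rfl) (fun i _ => hlogμ i)
  have hsum' : ∑ k, (n:ℝ)⁻¹ • Real.log (μ k) = m := by
    rw [← Finset.smul_sum]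
    have : ∑ k, Real.log (μ k) = Δvreq / vex := by
      field_simp at hsum ⊢
      rw [← Finset.mul_sum] at hsum
      rw [← hsum]
    rw [this, hm, smul_eq_mul]
    field_simp
  rw [hsum'] at hJ
  -- turn into products
  have key : (n:ℝ) * F m ≤ ∑ k, F (Real.log (μ k)) := by
    have : ∑ k, (n:ℝ)⁻¹ • F (Real.log (μ k)) = (n:ℝ)⁻¹ * ∑ k, F (Real.log (μ k)) := by
      rw [← Finset.smul_sum]; simp [smul_eq_mul]
    rw [this] at hJ
    rw [mul_comm, ← le_div_iff₀ hn0]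
    rwa [div_eq_inv_mul]
  have hlhs : (∏ _k : Fin n, Real.exp m * (1 - ε) / (1 - Real.exp m * ε))
      = Real.exp ((n:ℝ) * F m) := by
    rw [Finset.prod_const, Finset.card_univ, Fintype.card_fin, ← hexpF m hmL,
      ← Real.exp_nat_mul]
  have hrhs : (∏ k, μ k * (1 - ε) / (1 - μ k * ε)) = Real.exp (∑ k, F (Real.log (μ k))) := by
    rw [Real.exp_sum]
    apply Finset.prod_congr rfl
    intro k _
    rw [hexpF _ (hlogμ k), Real.exp_log (lt_trans zero_lt_one (hμ k).1)]
  rw [hlhs, hrhs]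
  exact Real.exp_le_exp.2 key
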